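/- Let 0 < q < 1 and define the q-Pochhammer symbol (α;q)_s = Π_{j=1}^s (1 - q^{j-1}α). In any representation φ of Pol(Σ_q^{2n}) with a unit vector ψ satisfying φ(t)ψ = ψ and φ(a_i)ψ = 0 for all i, the vectors ψ^m = C^m φ(a_1^{*m_1}···a_n^{*m_n})ψ with C^m = q^{-(Σ_i m_i)² + Σ_i m_i(m_i+1)/2} Π_i (q²;q²)_{m_i}^{-1/2} satisfy ‖φ(a_i*)ψ^m‖² = q^{2Σ_{j≤i} m_j} q^{4Σ_{j>i} m_j}(1 - q^{2(m_i+1)})‖ψ^m‖², and hence ψ^m ≠ 0 for every multi-index m ∈ ℕⁿ. -/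

import Mathlib

open Finset

/-- The q-Pochhammer symbol `(α;q)_s = ∏_{j=1}^s (1 - q^{j-1} α)`. -/
noncomputable def qPoch (α q : ℝ) (s : ℕ) : ℝ :=
  ∏ j ∈ Finset.range s, (1 - q ^ j * α)

/-- The normalization constant
`C^m = q^{-(∑ m_i)² + ∑ m_i(m_i+1)/2} ∏_i (q²;q²)_{m_i}^{-1/2}`. -/
noncomputable def cConst (q : ℝ) {n : ℕ} (m : Fin n → ℕ) : ℝ :=
  q ^ (-((∑ i, (m i : ℤ)) ^ 2) + ∑ i, (m i : ℤ) * ((m i : ℤ) + 1) / 2) *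
    (∏ i, Real.sqrt (qPoch (q ^ 2) (q ^ 2) (m i)))⁻¹

/-- The vector `ψ^m = C^m φ(a_1^{*m_1} ⋯ a_n^{*m_n}) ψ`. -/
noncomputable def psiVec {H : Type*} [NormedAddCommGroup H] [InnerProductSpace ℂ H]
    [CompleteSpace H] (q : ℝ) {n : ℕ} (a : Fin n → H →L[ℂ] H) (ψ : H)
    (m : Fin n → ℕ) : H :=
  ((cConst q m : ℝ) : ℂ) •
    (List.ofFn fun j : Fin n => (ContinuousLinearMap.adjoint (a j)) ^ (m j)).prod ψ


open ContinuousLinearMap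

namespace QSaux

variable {H : Type*} [NormedAddCommGroup H] [InnerProductSpace ℂ H] [CompleteSpace H] {n : ℕ}

/-- truncated multi-index as a function on ℕ -/
def MN (n : ℕ) (m : Fin n → ℕ) : ℕ → ℕ := fun j => if h : j < n then m ⟨j, h⟩ else 0

noncomputable def wv (a : Fin n → H →L[ℂ] H) (ψ : H) (m : Fin n → ℕ) (k : ℕ) : H :=
  (((List.ofFn fun j : Fin n => (ContinuousLinearMap.adjoint (a j)) ^ (m j)).drop k)).prod ψ

lemma wv_top (a : Fin n → H →L[ℂ] H) (ψ : H) (m : Fin n → ℕ) {k : ℕ} (hk : n ≤ k) :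
    wv a ψ m k = ψ := by
  unfold wv
  rw [List.drop_eq_nil_of_le (by simpa using hk), List.prod_nil, ContinuousLinearMap.one_apply]

lemma wv_cons (a : Fin n → H →L[ℂ] H) (ψ : H) (m : Fin n → ℕ) {k : ℕ} (hk : k < n) :
    wv a ψ m k
      = ((ContinuousLinearMap.adjoint (a ⟨k, hk⟩)) ^ (m ⟨k, hk⟩)) (wv a ψ m (k+1)) := by
  unfold wv
  rw [List.drop_eq_getElem_cons (by simpa using hk), List.prod_cons,
    ContinuousLinearMap.mul_apply, List.getElem_ofFn]

lemma wv_update (a : Fin n → H →L[ℂ] H) (ψ : H) (m : Fin n → ℕ) {k : ℕ} (i : Fin n)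
    (hik : (i : ℕ) < k) (x : ℕ) :
    wv a ψ (Function.update m i x) k = wv a ψ m k := by
  unfold wv
  have h : (List.ofFn fun j : Fin n => (ContinuousLinearMap.adjoint (a j)) ^ (Function.update m i x j)).drop k
      = (List.ofFn fun j : Fin n => (ContinuousLinearMap.adjoint (a j)) ^ (m j)).drop k := by
    apply List.ext_getElem
    · simp
    · intro s h1 h2
      rw [List.getElem_drop, List.getElem_drop, List.getElem_ofFn, List.getElem_ofFn]
      congr 1
      apply Function.update_of_ne
      intro hEq
      have := congrArg Fin.val hEq
      simp at this
      omega
  rw [h]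

lemma MN_coe {n : ℕ} (m : Fin n → ℕ) (j : Fin n) : MN n m (j : ℕ) = m j := by
  simp only [MN, dif_pos j.isLt]

lemma fin_filter_lt_sum {β : Type*} [AddCommMonoid β] {n : ℕ} (i : Fin n) (F : ℕ → β) :
    ∑ ℓ ∈ univ.filter (fun ℓ : Fin n => ℓ < i), F (ℓ : ℕ)
      = ∑ s ∈ Finset.range (i : ℕ), F s := by
  rw [Finset.sum_filter]
  rw [Finset.sum_congr rfl (fun ℓ _ => show (if ℓ < i then F (ℓ : ℕ) else 0)
      = (fun s : ℕ => if s < (i : ℕ) then F s else 0) (ℓ : ℕ) from by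
    by_cases h : (ℓ : ℕ) < (i : ℕ)
    · rw [if_pos (show ℓ < i from by rw [Fin.lt_def]; omega)]
      simp only [h, if_true]
    · rw [if_neg (show ¬ ℓ < i from by rw [Fin.lt_def]; omega)]
      simp only [h, if_false])]
  rw [Fin.sum_univ_eq_sum_range (fun s : ℕ => if s < (i : ℕ) then F s else 0) n]
  rw [← Finset.sum_filter]
  congr 1
  ext s
  simp only [Finset.mem_filter, Finset.mem_range]
  constructor
  · rintro ⟨_, h2⟩; exact h2
  · intro h; exact ⟨lt_of_lt_of_le h (le_of_lt i.isLt), h⟩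

lemma fin_filter_le_sum {n : ℕ} (i : Fin n) (m : Fin n → ℕ) :
    ∑ j ∈ univ.filter (fun j : Fin n => j ≤ i), m j
      = ∑ s ∈ Finset.range ((i : ℕ)+1), MN n m s := by
  rw [Finset.sum_filter]
  rw [Finset.sum_congr rfl (fun j _ => show (if j ≤ i then m j else 0)
      = (fun s : ℕ => if s < (i : ℕ)+1 then MN n m s else 0) (j : ℕ) from by
    by_cases h : (j : ℕ) < (i : ℕ)+1
    · rw [if_pos (show j ≤ i from by rw [Fin.le_def]; omega)]
      simp only [h, if_true, MN_coe]
    · rw [if_neg (show ¬ j ≤ i from by rw [Fin.le_def]; omega)]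
      simp only [h, if_false])]
  rw [Fin.sum_univ_eq_sum_range (fun s : ℕ => if s < (i : ℕ)+1 then MN n m s else 0) n]
  rw [← Finset.sum_filter]
  congr 1
  ext s
  simp only [Finset.mem_filter, Finset.mem_range]
  constructor
  · rintro ⟨_, h2⟩; exact h2
  · intro h; exact ⟨by have := i.isLt; omega, h⟩

lemma fin_filter_gt_sum {n : ℕ} (i : Fin n) (m : Fin n → ℕ) :
    ∑ j ∈ univ.filter (fun j : Fin n => i < j), m j
      = ∑ s ∈ Finset.Ico ((i : ℕ)+1) n, MN n m s := by
  rw [Finset.sum_filter]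
  rw [Finset.sum_congr rfl (fun j _ => show (if i < j then m j else 0)
      = (fun s : ℕ => if (i : ℕ)+1 ≤ s then MN n m s else 0) (j : ℕ) from by
    by_cases h : (i : ℕ)+1 ≤ (j : ℕ)
    · rw [if_pos (show i < j from by rw [Fin.lt_def]; omega)]
      simp only [h, if_true, MN_coe]
    · rw [if_neg (show ¬ i < j from by rw [Fin.lt_def]; omega)]
      simp only [h, if_false])]
  rw [Fin.sum_univ_eq_sum_range (fun s : ℕ => if (i : ℕ)+1 ≤ s then MN n m s else 0) n]
  rw [← Finset.sum_filter]
  congr 1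
  ext s
  simp only [Finset.mem_filter, Finset.mem_range, Finset.mem_Ico]
  constructor
  · rintro ⟨h1, h2⟩; exact ⟨h2, h1⟩
  · rintro ⟨h1, h2⟩; exact ⟨h2, h1⟩

lemma telescope (q : ℝ) (n : ℕ) (M : ℕ → ℕ) (i : ℕ) (hi : i < n) :
    q^2 * (q^(2 * ∑ j ∈ Finset.range i, M j + 4 * ∑ j ∈ Finset.Ico (i+1) n, M j
          + 2*(M i - 1)) * (1 - q^(2 * M i)))
      + q^2*(1-q^2) * (∑ s ∈ Finset.range i,
          q^(2 * ∑ j ∈ Finset.range s, M j + 4 * ∑ j ∈ Finset.Ico (s+1) n, M j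
            + 2*(M s - 1)) * (1 - q^(2 * M s)))
      + (1-q^2) * q^(4 * ∑ j ∈ Finset.Ico 0 n, M j)
    = q^(2 * ∑ j ∈ Finset.range (i+1), M j + 4 * ∑ j ∈ Finset.Ico (i+1) n, M j)
        * (1 - q^(2*(M i + 1))) := by
  set PP : ℕ → ℝ :=
    fun s => q^(2 * ∑ j ∈ Finset.range s, M j + 4 * ∑ j ∈ Finset.Ico s n, M j) with hPP
  have hstep : ∀ s, s < n →
      q^2 * (q^(2 * ∑ j ∈ Finset.range s, M j + 4 * ∑ j ∈ Finset.Ico (s+1) n, M j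
          + 2*(M s - 1)) * (1 - q^(2 * M s))) = PP (s+1) - PP s := by
    intro s hs
    have h1 : ∑ j ∈ Finset.range (s+1), M j = ∑ j ∈ Finset.range s, M j + M s :=
      Finset.sum_range_succ _ s
    have h2 : ∑ j ∈ Finset.Ico s n, M j = M s + ∑ j ∈ Finset.Ico (s+1) n, M j :=
      Finset.sum_eq_sum_Ico_succ_bot hs _
    simp only [hPP]
    rw [h1, h2]
    set R := ∑ j ∈ Finset.range s, M j
    set B := ∑ j ∈ Finset.Ico (s+1) n, M j
    rcases Nat.eq_zero_or_pos (M s) with hu | hu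
    · rw [hu]
      norm_num
    · obtain ⟨w, hw⟩ : ∃ w, M s = w + 1 := ⟨M s - 1, by omega⟩
      rw [hw, Nat.add_sub_cancel]
      rw [show 2*(R+(w+1))+4*B = (R+R)+(w+w)+(B+B+B+B)+2 from by ring,
        show 2*R+4*((w+1)+B) = (R+R)+(w+w)+(w+w)+(B+B+B+B)+4 from by ring,
        show 2*R+4*B+2*w = (R+R)+(w+w)+(B+B+B+B) from by ring,
        show 2*(w+1) = (w+w)+2 from by ring]
      simp only [pow_add]
      ring
  have hsum : ∑ s ∈ Finset.range i,
      q^2 * (q^(2 * ∑ j ∈ Finset.range s, M j + 4 * ∑ j ∈ Finset.Ico (s+1) n, M j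
          + 2*(M s - 1)) * (1 - q^(2 * M s))) = PP i - PP 0 := by
    rw [Finset.sum_congr rfl (fun s hs => hstep s (by
      have := Finset.mem_range.1 hs; omega))]
    exact Finset.sum_range_sub PP i
  have hP0 : PP 0 = q^(4 * ∑ j ∈ Finset.Ico 0 n, M j) := by
    simp [hPP]
  have hrw : q^2*(1-q^2) * (∑ s ∈ Finset.range i,
      q^(2 * ∑ j ∈ Finset.range s, M j + 4 * ∑ j ∈ Finset.Ico (s+1) n, M j
        + 2*(M s - 1)) * (1 - q^(2 * M s))) = (1-q^2) * (PP i - PP 0) := by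
    rw [← hsum, Finset.mul_sum]
    rw [Finset.mul_sum]
    apply Finset.sum_congr rfl
    intro s _
    ring
  rw [hrw, hP0]
  have hgoal : q^2 * (q^(2 * ∑ j ∈ Finset.range i, M j + 4 * ∑ j ∈ Finset.Ico (i+1) n, M j
          + 2*(M i - 1)) * (1 - q^(2 * M i))) + (1-q^2) * PP i
      = q^(2 * ∑ j ∈ Finset.range (i+1), M j + 4 * ∑ j ∈ Finset.Ico (i+1) n, M j)
          * (1 - q^(2*(M i + 1))) := by
    simp only [hPP]
    rw [Finset.sum_range_succ, Finset.sum_eq_sum_Ico_succ_bot hi M]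
    set R := ∑ j ∈ Finset.range i, M j
    set B := ∑ j ∈ Finset.Ico (i+1) n, M j
    rcases Nat.eq_zero_or_pos (M i) with hu | hu
    · rw [hu]
      norm_num
      ring
    · obtain ⟨w, hw⟩ : ∃ w, M i = w + 1 := ⟨M i - 1, by omega⟩
      rw [hw, Nat.add_sub_cancel]
      rw [show 2*R+4*B+2*w = (R+R)+(w+w)+(B+B+B+B) from by ring,
        show 2*(w+1) = (w+w)+2 from by ring,
        show 2*R+4*((w+1)+B) = (R+R)+(w+w)+(w+w)+(B+B+B+B)+4 from by ring,
        show 2*(R+(w+1))+4*B = (R+R)+(w+w)+(B+B+B+B)+2 from by ring,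
        show 2*((w+1)+1) = (w+w)+4 from by ring]
      simp only [pow_add]
      ring
  linarith [hgoal]

lemma comm_pow {X Y : H →L[ℂ] H} {c : ℂ} (h : X * Y = c • (Y * X)) (p : ℕ) :
    X * Y ^ p = c ^ p • (Y ^ p * X) := by
  induction p with
  | zero => simp
  | succ p ih =>
    calc X * Y ^ (p+1) = (X * Y) * Y ^ p := by rw [pow_succ', mul_assoc]
    _ = c • (Y * (X * Y ^ p)) := by rw [h, smul_mul_assoc, mul_assoc]
    _ = c • (Y * (c ^ p • (Y ^ p * X))) := by rw [ih]
    _ = c ^ (p+1) • (Y ^ (p+1) * X) := by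
        rw [mul_smul_comm, smul_smul, pow_succ' c, pow_succ' Y, mul_assoc]

section Rel

variable (q : ℝ) (a : Fin n → H →L[ℂ] H) (t : H →L[ℂ] H) (ψ : H)

lemma tA (hts : ContinuousLinearMap.adjoint t = t)
    (r1 : ∀ i, a i * t = ((q : ℂ) ^ 2) • (t * a i)) (j : Fin n) :
    t * ContinuousLinearMap.adjoint (a j)
      = ((q : ℂ) ^ 2) • (ContinuousLinearMap.adjoint (a j) * t) := by
  have h1 := congrArg star (r1 j)
  simp only [star_mul, star_smul, ContinuousLinearMap.star_eq_adjoint, hts, star_pow,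
    Complex.star_def, Complex.conj_ofReal] at h1
  exact h1

lemma aA (r3 : ∀ i j, i < j → a i * ContinuousLinearMap.adjoint (a j)
      = ((q : ℂ) ^ 3) • (ContinuousLinearMap.adjoint (a j) * a i))
    (i j : Fin n) (hij : i ≠ j) :
    a i * ContinuousLinearMap.adjoint (a j)
      = ((q : ℂ) ^ 3) • (ContinuousLinearMap.adjoint (a j) * a i) := by
  rcases lt_or_gt_of_ne hij with hlt | hgt
  · exact r3 i j hlt
  · have h1 := congrArg star (r3 j i hgt)
    simp only [star_mul, star_smul, ContinuousLinearMap.star_eq_adjoint,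
      ContinuousLinearMap.adjoint_adjoint, star_pow, Complex.star_def,
      Complex.conj_ofReal] at h1
    exact h1

lemma tW (hts : ContinuousLinearMap.adjoint t = t)
    (r1 : ∀ i, a i * t = ((q : ℂ) ^ 2) • (t * a i)) (htψ : t ψ = ψ) :
    ∀ d k m, n - k ≤ d →
      t (wv a ψ m k) = (((q : ℂ)) ^ (2 * ∑ j ∈ Finset.Ico k n, MN n m j)) • wv a ψ m k := by
  intro d
  induction d with
  | zero =>
    intro k m hd
    have hk : n ≤ k := by omega
    rw [wv_top a ψ m hk, Finset.Ico_eq_empty (by omega), Finset.sum_empty, mul_zero, pow_zero,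
      one_smul, htψ]
  | succ d ih =>
    intro k m hd
    by_cases hk : n ≤ k
    · rw [wv_top a ψ m hk, Finset.Ico_eq_empty (by omega), Finset.sum_empty, mul_zero, pow_zero,
        one_smul, htψ]
    · push_neg at hk
      rw [wv_cons a ψ m hk]
      set k' : Fin n := ⟨k, hk⟩
      have h1 : t ((ContinuousLinearMap.adjoint (a k') ^ (m k')) (wv a ψ m (k+1)))
          = (t * ContinuousLinearMap.adjoint (a k') ^ (m k')) (wv a ψ m (k+1)) := rfl
      rw [h1, comm_pow (tA q a t hts r1 k') (m k')]
      rw [ContinuousLinearMap.smul_apply, ContinuousLinearMap.mul_apply,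
        ih (k+1) m (by omega), map_smul, smul_smul]
      rw [Finset.sum_eq_sum_Ico_succ_bot hk]
      have hMN : MN n m k = m k' := by show MN n m k = m ⟨k, hk⟩; simp [MN, hk]
      rw [hMN, ← pow_mul, ← pow_add]
      congr 2
      ring

lemma aW_zero (haψ : ∀ i, a i ψ = 0)
    (r3 : ∀ i j, i < j → a i * ContinuousLinearMap.adjoint (a j)
      = ((q : ℂ) ^ 3) • (ContinuousLinearMap.adjoint (a j) * a i)) :
    ∀ d k m (i : Fin n), n - k ≤ d → (i : ℕ) < k → a i (wv a ψ m k) = 0 := by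
  intro d
  induction d with
  | zero =>
    intro k m i hd hik
    rw [wv_top a ψ m (by omega), haψ]
  | succ d ih =>
    intro k m i hd hik
    by_cases hk : n ≤ k
    · rw [wv_top a ψ m hk, haψ]
    · push_neg at hk
      rw [wv_cons a ψ m hk]
      set k' : Fin n := ⟨k, hk⟩
      have hne : i ≠ k' := by
        intro hEq
        have := congrArg Fin.val hEq
        simp [k'] at this
        omega
      have h1 : a i ((ContinuousLinearMap.adjoint (a k') ^ (m k')) (wv a ψ m (k+1)))
          = (a i * ContinuousLinearMap.adjoint (a k') ^ (m k')) (wv a ψ m (k+1)) := rfl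
      rw [h1, comm_pow (aA q a r3 i k' hne) (m k')]
      rw [ContinuousLinearMap.smul_apply, ContinuousLinearMap.mul_apply,
        ih (k+1) m i (by omega) (by omega), map_zero, smul_zero]

lemma scalar_step (c : ℂ) (S p : ℕ) :
    c^2 * (c^(4*S+2*(p-1)) * (1 - c^(2*p))) + (1 - c^2) * c^(4*p+4*S)
      = c^(4*S+2*p) * (1 - c^(2*(p+1))) := by
  cases p with
  | zero => simp; ring
  | succ s =>
    rw [show 4*S+2*((s+1)-1) = S+S+S+S+(s+s) from by omega,
      show 4*(s+1)+4*S = (s+s)+(s+s)+(S+S+S+S)+4 from by omega,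
      show 4*S+2*(s+1) = S+S+S+S+(s+s)+2 from by omega,
      show 2*(s+1+1) = (s+s)+4 from by omega,
      show 2*(s+1) = (s+s)+2 from by omega]
    simp only [pow_add]
    ring

lemma key_pow (hts : ContinuousLinearMap.adjoint t = t)
    (r1 : ∀ i, a i * t = ((q : ℂ) ^ 2) • (t * a i))
    (r3 : ∀ i j, i < j → a i * ContinuousLinearMap.adjoint (a j)
      = ((q : ℂ) ^ 3) • (ContinuousLinearMap.adjoint (a j) * a i))
    (r4 : ∀ i, a i * ContinuousLinearMap.adjoint (a i)
        = ((q : ℂ) ^ 2) • (ContinuousLinearMap.adjoint (a i) * a i)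
          + ((q : ℂ) ^ 2 * (1 - (q : ℂ) ^ 2)) •
              ∑ ℓ ∈ univ.filter (· < i),
                ContinuousLinearMap.adjoint (a ℓ) * a ℓ
          + (1 - (q : ℂ) ^ 2) • (t * t))
    (htψ : t ψ = ψ) (haψ : ∀ i, a i ψ = 0)
    (m : Fin n → ℕ) (i : Fin n) (p : ℕ) :
    a i ((ContinuousLinearMap.adjoint (a i) ^ p) (wv a ψ m ((i : ℕ)+1)))
      = (((q : ℂ)) ^ (4 * (∑ j ∈ Finset.Ico ((i : ℕ)+1) n, MN n m j) + 2 * (p-1))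
          * (1 - ((q : ℂ)) ^ (2*p)))
        • ((ContinuousLinearMap.adjoint (a i) ^ (p-1)) (wv a ψ m ((i : ℕ)+1))) := by
  set S := ∑ j ∈ Finset.Ico ((i : ℕ)+1) n, MN n m j with hS
  set x := wv a ψ m ((i : ℕ)+1) with hx
  have hax : a i x = 0 := aW_zero q a ψ haψ r3 n ((i : ℕ)+1) m i (by omega) (by omega)
  have htx : t x = ((q : ℂ)) ^ (2 * S) • x := tW q a t ψ hts r1 htψ n ((i : ℕ)+1) m (by omega)
  induction p with
  | zero =>
    simp [ContinuousLinearMap.one_apply, hax]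
  | succ p ih =>
    set A := ContinuousLinearMap.adjoint (a i) with hA
    set y := (A ^ p) x with hy
    have h0 : a i ((A ^ (p+1)) x) = (a i * A) y := by rw [pow_succ']; rfl
    rw [h0, r4 i, ContinuousLinearMap.add_apply, ContinuousLinearMap.add_apply,
      ContinuousLinearMap.smul_apply, ContinuousLinearMap.smul_apply,
      ContinuousLinearMap.smul_apply, ContinuousLinearMap.mul_apply,
      ContinuousLinearMap.mul_apply, ContinuousLinearMap.sum_apply]
    have hsum : ∑ ℓ ∈ univ.filter (· < i), (ContinuousLinearMap.adjoint (a ℓ) * a ℓ) y = 0 := by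
      apply Finset.sum_eq_zero
      intro ℓ hℓ
      have hℓi : ℓ < i := by simpa using hℓ
      have hne : ℓ ≠ i := ne_of_lt hℓi
      have h2 : a ℓ y = (a ℓ * A ^ p) x := rfl
      have hax2 : a ℓ x = 0 := aW_zero q a ψ haψ r3 n ((i : ℕ)+1) m ℓ (by omega)
        (by have := hℓi; omega)
      rw [ContinuousLinearMap.mul_apply, h2, hA, comm_pow (aA q a r3 ℓ i hne) p,
        ContinuousLinearMap.smul_apply, ContinuousLinearMap.mul_apply, hax2,
        map_zero, smul_zero, map_zero]
    have hty : t y = ((q : ℂ) ^ (2*p + 2*S)) • y := by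
      have h3 : t y = (t * A ^ p) x := rfl
      rw [h3, hA, comm_pow (tA q a t hts r1 i) p, ContinuousLinearMap.smul_apply,
        ContinuousLinearMap.mul_apply, htx, map_smul, smul_smul, ← pow_mul, ← pow_add]
    have htty : t (t y) = ((q : ℂ) ^ (4*p + 4*S)) • y := by
      rw [hty, map_smul, hty, smul_smul, ← pow_add]
      congr 2
      omega
    have hAai : A (a i y) = (((q : ℂ)) ^ (4 * S + 2 * (p-1)) * (1 - ((q : ℂ)) ^ (2*p)))
        • (A ^ p) x := by
      rw [hy, ih, map_smul]
      cases p with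
      | zero => simp
      | succ s =>
        rw [Nat.add_sub_cancel, pow_succ', ContinuousLinearMap.mul_apply]
    rw [hsum, hAai, htty, smul_zero, smul_smul, add_zero, hy, smul_smul, ← add_smul,
      Nat.add_sub_cancel]
    congr 1
    exact scalar_step (q : ℂ) S p

lemma aW (hts : ContinuousLinearMap.adjoint t = t)
    (r1 : ∀ i, a i * t = ((q : ℂ) ^ 2) • (t * a i))
    (r3 : ∀ i j, i < j → a i * ContinuousLinearMap.adjoint (a j)
      = ((q : ℂ) ^ 3) • (ContinuousLinearMap.adjoint (a j) * a i))
    (r4 : ∀ i, a i * ContinuousLinearMap.adjoint (a i)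
        = ((q : ℂ) ^ 2) • (ContinuousLinearMap.adjoint (a i) * a i)
          + ((q : ℂ) ^ 2 * (1 - (q : ℂ) ^ 2)) •
              ∑ ℓ ∈ univ.filter (· < i),
                ContinuousLinearMap.adjoint (a ℓ) * a ℓ
          + (1 - (q : ℂ) ^ 2) • (t * t))
    (htψ : t ψ = ψ) (haψ : ∀ i, a i ψ = 0) :
    ∀ d k m (i : Fin n), n - k ≤ d → k ≤ (i : ℕ) →
      a i (wv a ψ m k)
        = (((q : ℂ)) ^ (3 * ∑ j ∈ Finset.Ico k (i : ℕ), MN n m j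
              + 4 * ∑ j ∈ Finset.Ico ((i : ℕ)+1) n, MN n m j + 2 * (m i - 1))
            * (1 - ((q : ℂ)) ^ (2 * m i)))
          • wv a ψ (Function.update m i (m i - 1)) k := by
  intro d
  induction d with
  | zero =>
    intro k m i hd hki
    exact absurd (i.isLt) (by omega)
  | succ d ih =>
    intro k m i hd hki
    have hk : k < n := lt_of_le_of_lt hki i.isLt
    rcases eq_or_lt_of_le hki with hEq | hlt
    · -- k = ↑i
      have hfin' : (⟨k, hk⟩ : Fin n) = i := by
        apply Fin.ext
        simpa using hEq
      have h1 : wv a ψ m k = ((ContinuousLinearMap.adjoint (a i)) ^ (m i)) (wv a ψ m (k+1)) := by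
        rw [wv_cons a ψ m hk, hfin']
      have hk1 : k + 1 = (i : ℕ) + 1 := by omega
      rw [h1, hk1, key_pow q a t ψ hts r1 r3 r4 htψ haψ m i (m i)]
      have h2 : wv a ψ (Function.update m i (m i - 1)) k
          = ((ContinuousLinearMap.adjoint (a i)) ^ (m i - 1)) (wv a ψ m ((i : ℕ)+1)) := by
        rw [wv_cons a ψ (Function.update m i (m i - 1)) hk, hfin', Function.update_self,
          hk1, wv_update a ψ m i (by omega)]
      rw [h2, hEq, Finset.Ico_self, Finset.sum_empty]
      norm_num
    · -- k < ↑i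
      set k' : Fin n := ⟨k, hk⟩ with hk'
      have hne : i ≠ k' := by
        intro hEq
        have := congrArg Fin.val hEq
        simp [k'] at this
        omega
      rw [wv_cons a ψ m hk]
      have h1 : a i (((ContinuousLinearMap.adjoint (a k')) ^ (m k')) (wv a ψ m (k+1)))
          = (a i * (ContinuousLinearMap.adjoint (a k')) ^ (m k')) (wv a ψ m (k+1)) := rfl
      rw [h1, comm_pow (aA q a r3 i k' hne) (m k'), ContinuousLinearMap.smul_apply,
        ContinuousLinearMap.mul_apply, ih (k+1) m i (by omega) (by omega), map_smul,
        smul_smul]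
      have h2 : wv a ψ (Function.update m i (m i - 1)) k
          = ((ContinuousLinearMap.adjoint (a k')) ^ (m k'))
              (wv a ψ (Function.update m i (m i - 1)) (k+1)) := by
        rw [wv_cons a ψ (Function.update m i (m i - 1)) hk,
          Function.update_of_ne (Ne.symm hne)]
      rw [← h2]
      congr 1
      rw [Finset.sum_eq_sum_Ico_succ_bot hlt]
      have hMN : MN n m k = m k' := by show MN n m k = m ⟨k, hk⟩; simp [MN, hk]
      rw [hMN, ← pow_mul, ← mul_assoc, ← pow_add]
      congr 2
      ring

noncomputable def Gq (q : ℝ) (p : ℕ) : ℝ :=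
  ∏ s ∈ Finset.range p, ((q)^(2*s) * (1 - q^(2*s+2)))

lemma Gq_pos {q : ℝ} (hq0 : 0 < q) (hq1 : q < 1) (p : ℕ) : 0 < Gq q p := by
  apply Finset.prod_pos
  intro s _
  apply mul_pos (pow_pos hq0 _)
  have : q ^ (2*s+2) < 1 := pow_lt_one₀ (le_of_lt hq0) hq1 (by omega)
  linarith

lemma norm_step (hts : ContinuousLinearMap.adjoint t = t)
    (r1 : ∀ i, a i * t = ((q : ℂ) ^ 2) • (t * a i))
    (r3 : ∀ i j, i < j → a i * ContinuousLinearMap.adjoint (a j)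
      = ((q : ℂ) ^ 3) • (ContinuousLinearMap.adjoint (a j) * a i))
    (r4 : ∀ i, a i * ContinuousLinearMap.adjoint (a i)
        = ((q : ℂ) ^ 2) • (ContinuousLinearMap.adjoint (a i) * a i)
          + ((q : ℂ) ^ 2 * (1 - (q : ℂ) ^ 2)) •
              ∑ ℓ ∈ univ.filter (· < i),
                ContinuousLinearMap.adjoint (a ℓ) * a ℓ
          + (1 - (q : ℂ) ^ 2) • (t * t))
    (htψ : t ψ = ψ) (haψ : ∀ i, a i ψ = 0)
    (m : Fin n → ℕ) (i : Fin n) (p : ℕ) :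
    ‖((ContinuousLinearMap.adjoint (a i)) ^ (p+1)) (wv a ψ m ((i : ℕ)+1))‖^2
      = q^(4 * (∑ j ∈ Finset.Ico ((i : ℕ)+1) n, MN n m j) + 2*p) * (1 - q^(2*(p+1)))
        * ‖((ContinuousLinearMap.adjoint (a i)) ^ p) (wv a ψ m ((i : ℕ)+1))‖^2 := by
  set A := ContinuousLinearMap.adjoint (a i) with hA
  set x := wv a ψ m ((i : ℕ)+1) with hx
  set S := ∑ j ∈ Finset.Ico ((i : ℕ)+1) n, MN n m j with hS
  set z := (A ^ p) x with hzdef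
  have hz : (A ^ (p+1)) x = A z := by rw [pow_succ']; rfl
  have hkey : a i ((A ^ (p+1)) x)
      = (((q : ℂ))^(4*S+2*p) * (1 - ((q : ℂ))^(2*(p+1)))) • z := by
    have := key_pow q a t ψ hts r1 r3 r4 htψ haψ m i (p+1)
    rw [Nat.add_sub_cancel] at this
    exact this
  have e1 : ((inner ℂ ((A ^ (p+1)) x) ((A ^ (p+1)) x)) : ℂ)
      = inner ℂ z (a i ((A ^ (p+1)) x)) := by
    conv_lhs => rw [hz, hA]
    rw [ContinuousLinearMap.adjoint_inner_left]
    rw [← hA, ← hz]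
  have e2 : ((inner ℂ ((A ^ (p+1)) x) ((A ^ (p+1)) x)) : ℂ)
      = (((q : ℂ))^(4*S+2*p) * (1 - ((q : ℂ))^(2*(p+1)))) * ((inner ℂ z z) : ℂ) := by
    rw [e1, hkey, inner_smul_right]
  rw [inner_self_eq_norm_sq_to_K, inner_self_eq_norm_sq_to_K] at e2
  push_cast [Complex.coe_algebraMap] at e2
  rw [← RCLike.ofReal_inj (K := ℂ)]
  push_cast [Complex.coe_algebraMap]
  linear_combination e2

lemma wv_norm_pow (hts : ContinuousLinearMap.adjoint t = t)
    (r1 : ∀ i, a i * t = ((q : ℂ) ^ 2) • (t * a i))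
    (r3 : ∀ i j, i < j → a i * ContinuousLinearMap.adjoint (a j)
      = ((q : ℂ) ^ 3) • (ContinuousLinearMap.adjoint (a j) * a i))
    (r4 : ∀ i, a i * ContinuousLinearMap.adjoint (a i)
        = ((q : ℂ) ^ 2) • (ContinuousLinearMap.adjoint (a i) * a i)
          + ((q : ℂ) ^ 2 * (1 - (q : ℂ) ^ 2)) •
              ∑ ℓ ∈ univ.filter (· < i),
                ContinuousLinearMap.adjoint (a ℓ) * a ℓ
          + (1 - (q : ℂ) ^ 2) • (t * t))
    (htψ : t ψ = ψ) (haψ : ∀ i, a i ψ = 0) (m : Fin n → ℕ) (i : Fin n) (p : ℕ) :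
    ‖((ContinuousLinearMap.adjoint (a i)) ^ p) (wv a ψ m ((i : ℕ)+1))‖^2
      = q^(4 * p * (∑ j ∈ Finset.Ico ((i : ℕ)+1) n, MN n m j)) * Gq q p
        * ‖wv a ψ m ((i : ℕ)+1)‖^2 := by
  induction p with
  | zero => simp [Gq, ContinuousLinearMap.one_apply]
  | succ p ih =>
    rw [norm_step q a t ψ hts r1 r3 r4 htψ haψ m i p, ih]
    have hG : Gq q (p+1) = Gq q p * ((q)^(2*p) * (1 - q^(2*p+2))) :=
      Finset.prod_range_succ _ p
    rw [hG]
    set S := ∑ j ∈ Finset.Ico ((i : ℕ)+1) n, MN n m j with hS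
    rw [show 4*(p+1)*S = (4*S) + 4*p*S from by ring, show 2*(p+1) = 2*p+2 from by ring]
    simp only [pow_add]
    ring

lemma norm_peel (hts : ContinuousLinearMap.adjoint t = t)
    (r1 : ∀ i, a i * t = ((q : ℂ) ^ 2) • (t * a i))
    (r3 : ∀ i j, i < j → a i * ContinuousLinearMap.adjoint (a j)
      = ((q : ℂ) ^ 3) • (ContinuousLinearMap.adjoint (a j) * a i))
    (r4 : ∀ i, a i * ContinuousLinearMap.adjoint (a i)
        = ((q : ℂ) ^ 2) • (ContinuousLinearMap.adjoint (a i) * a i)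
          + ((q : ℂ) ^ 2 * (1 - (q : ℂ) ^ 2)) •
              ∑ ℓ ∈ univ.filter (· < i),
                ContinuousLinearMap.adjoint (a ℓ) * a ℓ
          + (1 - (q : ℂ) ^ 2) • (t * t))
    (htψ : t ψ = ψ) (haψ : ∀ i, a i ψ = 0) {k : ℕ} (hk : k < n) (m : Fin n → ℕ) :
    ‖wv a ψ m k‖^2
      = q^(4 * (m ⟨k, hk⟩) * (∑ j ∈ Finset.Ico (k+1) n, MN n m j)) * Gq q (m ⟨k, hk⟩)
        * ‖wv a ψ m (k+1)‖^2 := by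
  rw [wv_cons a ψ m hk]
  exact wv_norm_pow q a t ψ hts r1 r3 r4 htψ haψ m ⟨k, hk⟩ (m ⟨k, hk⟩)

lemma wv_ne (hq0 : 0 < q) (hq1 : q < 1) (hψ : ‖ψ‖ = 1) (hts : ContinuousLinearMap.adjoint t = t)
    (r1 : ∀ i, a i * t = ((q : ℂ) ^ 2) • (t * a i))
    (r3 : ∀ i j, i < j → a i * ContinuousLinearMap.adjoint (a j)
      = ((q : ℂ) ^ 3) • (ContinuousLinearMap.adjoint (a j) * a i))
    (r4 : ∀ i, a i * ContinuousLinearMap.adjoint (a i)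
        = ((q : ℂ) ^ 2) • (ContinuousLinearMap.adjoint (a i) * a i)
          + ((q : ℂ) ^ 2 * (1 - (q : ℂ) ^ 2)) •
              ∑ ℓ ∈ univ.filter (· < i),
                ContinuousLinearMap.adjoint (a ℓ) * a ℓ
          + (1 - (q : ℂ) ^ 2) • (t * t))
    (htψ : t ψ = ψ) (haψ : ∀ i, a i ψ = 0) :
    ∀ d k m, n - k ≤ d → wv a ψ m k ≠ 0 := by
  intro d
  induction d with
  | zero =>
    intro k m hd
    rw [wv_top a ψ m (by omega)]
    intro h
    rw [h] at hψ
    simp at hψ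
  | succ d ih =>
    intro k m hd
    by_cases hk : n ≤ k
    · rw [wv_top a ψ m hk]
      intro h
      rw [h] at hψ
      simp at hψ
    · push_neg at hk
      have hnorm := norm_peel q a t ψ hts r1 r3 r4 htψ haψ hk m
      have hnext : wv a ψ m (k+1) ≠ 0 := ih (k+1) m (by omega)
      have hpos : 0 < ‖wv a ψ m k‖^2 := by
        rw [hnorm]
        have h1 : 0 < ‖wv a ψ m (k+1)‖ := norm_pos_iff.2 hnext
        have h2 := Gq_pos hq0 hq1 (m ⟨k, hk⟩)
        positivity
      intro h
      rw [h] at hpos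
      simp at hpos

lemma norm_ratio (hq0 : 0 < q) (hq1 : q < 1) (hψ : ‖ψ‖ = 1) (hts : ContinuousLinearMap.adjoint t = t)
    (r1 : ∀ i, a i * t = ((q : ℂ) ^ 2) • (t * a i))
    (r3 : ∀ i j, i < j → a i * ContinuousLinearMap.adjoint (a j)
      = ((q : ℂ) ^ 3) • (ContinuousLinearMap.adjoint (a j) * a i))
    (r4 : ∀ i, a i * ContinuousLinearMap.adjoint (a i)
        = ((q : ℂ) ^ 2) • (ContinuousLinearMap.adjoint (a i) * a i)
          + ((q : ℂ) ^ 2 * (1 - (q : ℂ) ^ 2)) •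
              ∑ ℓ ∈ univ.filter (· < i),
                ContinuousLinearMap.adjoint (a ℓ) * a ℓ
          + (1 - (q : ℂ) ^ 2) • (t * t))
    (htψ : t ψ = ψ) (haψ : ∀ i, a i ψ = 0) :
    ∀ d k m (ℓ : Fin n), n - k ≤ d → k ≤ (ℓ : ℕ) → 1 ≤ m ℓ →
      ‖wv a ψ m k‖^2
        = q^(4 * ∑ j ∈ Finset.Ico k (ℓ : ℕ), MN n m j
              + 4 * ∑ j ∈ Finset.Ico ((ℓ : ℕ)+1) n, MN n m j + 2*(m ℓ - 1))
          * (1 - q^(2 * m ℓ)) * ‖wv a ψ (Function.update m ℓ (m ℓ - 1)) k‖^2 := by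
  intro d
  induction d with
  | zero =>
    intro k m ℓ hd hkℓ hm
    exact absurd (ℓ.isLt) (by omega)
  | succ d ih =>
    intro k m ℓ hd hkℓ hm
    have hk : k < n := lt_of_le_of_lt hkℓ ℓ.isLt
    rcases eq_or_lt_of_le hkℓ with hEq | hlt
    · -- k = ↑ℓ
      have hfin : (⟨k, hk⟩ : Fin n) = ℓ := by
        apply Fin.ext
        simpa using hEq
      obtain ⟨s, hs⟩ : ∃ s, m ℓ = s + 1 := ⟨m ℓ - 1, by omega⟩
      have h1 : wv a ψ m k
          = ((ContinuousLinearMap.adjoint (a ℓ)) ^ (s+1)) (wv a ψ m ((ℓ : ℕ)+1)) := by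
        rw [wv_cons a ψ m hk, hfin, hs, show k+1 = (ℓ : ℕ)+1 from by omega]
      have h2 : wv a ψ (Function.update m ℓ (m ℓ - 1)) k
          = ((ContinuousLinearMap.adjoint (a ℓ)) ^ s) (wv a ψ m ((ℓ : ℕ)+1)) := by
        rw [wv_cons a ψ (Function.update m ℓ (m ℓ - 1)) hk, hfin, Function.update_self,
          show k+1 = (ℓ : ℕ)+1 from by omega, wv_update a ψ m ℓ (by omega), hs,
          Nat.add_sub_cancel]
      rw [h1, h2, norm_step q a t ψ hts r1 r3 r4 htψ haψ m ℓ s, hEq, Finset.Ico_self, Finset.sum_empty, hs]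
      norm_num
    · -- k < ↑ℓ
      set k' : Fin n := ⟨k, hk⟩ with hk'
      have hne : k' ≠ ℓ := by
        intro hEq
        have := congrArg Fin.val hEq
        simp [k'] at this
        omega
      set m' := Function.update m ℓ (m ℓ - 1) with hm'
      have hp : m' k' = m k' := by rw [hm', Function.update_of_ne hne]
      have hMNeq : ∀ j, j ≠ (ℓ : ℕ) → MN n m' j = MN n m j := by
        intro j hj
        unfold MN
        by_cases hjn : j < n
        · rw [dif_pos hjn, dif_pos hjn, hm',
            Function.update_of_ne (fun hEq2 => hj (by simpa using congrArg Fin.val hEq2))]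
        · simp only [dif_neg hjn]
      have hMNl : MN n m' (ℓ : ℕ) = m ℓ - 1 := by
        simp only [MN, dif_pos ℓ.isLt, hm']
        rw [show (⟨(ℓ : ℕ), ℓ.isLt⟩ : Fin n) = ℓ from by apply Fin.ext; rfl,
          Function.update_self]
      have hMNl2 : MN n m (ℓ : ℕ) = m ℓ := by
        simp only [MN, dif_pos ℓ.isLt]
      have hmem : (ℓ : ℕ) ∈ Finset.Ico (k+1) n := by
        rw [Finset.mem_Ico]
        exact ⟨by omega, ℓ.isLt⟩
      have hSS : ∑ j ∈ Finset.Ico (k+1) n, MN n m j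
          = (∑ j ∈ Finset.Ico (k+1) n, MN n m' j) + 1 := by
        rw [← Finset.sum_erase_add _ _ hmem, ← Finset.sum_erase_add _ _ hmem]
        have hsc : ∑ j ∈ (Finset.Ico (k+1) n).erase (ℓ : ℕ), MN n m' j
            = ∑ j ∈ (Finset.Ico (k+1) n).erase (ℓ : ℕ), MN n m j :=
          Finset.sum_congr rfl (fun j hj => hMNeq j (Finset.ne_of_mem_erase hj))
        rw [hsc, hMNl, hMNl2]
        omega
      have hpeel1 := norm_peel q a t ψ hts r1 r3 r4 htψ haψ hk m
      have hpeel2 := norm_peel q a t ψ hts r1 r3 r4 htψ haψ hk m'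
      have hih := ih (k+1) m ℓ (by omega) (by omega) hm
      rw [hpeel1, hpeel2, hih, ← hm', hp, hSS]
      rw [Finset.sum_eq_sum_Ico_succ_bot hlt (MN n m)]
      have hMNk : MN n m k = m k' := by simp [MN, hk, hk']
      rw [hMNk]
      set p := m k'
      set S' := ∑ j ∈ Finset.Ico (k+1) n, MN n m' j
      set B := ∑ j ∈ Finset.Ico ((ℓ : ℕ)+1) n, MN n m j
      set Sg := ∑ j ∈ Finset.Ico (k+1) (ℓ : ℕ), MN n m j
      rw [show 4*p*(S'+1) = 4*p*S' + 4*p from by ring,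
        show 4*(p + Sg) + 4*B + 2*(m ℓ - 1) = 4*p + (4*Sg + 4*B + 2*(m ℓ - 1)) from by ring]
      simp only [pow_add]
      ring

lemma aW_norm (hq0 : 0 < q) (hq1 : q < 1) (hψ : ‖ψ‖ = 1)
    (hts : ContinuousLinearMap.adjoint t = t)
    (r1 : ∀ i, a i * t = ((q : ℂ) ^ 2) • (t * a i))
    (r3 : ∀ i j, i < j → a i * ContinuousLinearMap.adjoint (a j)
      = ((q : ℂ) ^ 3) • (ContinuousLinearMap.adjoint (a j) * a i))
    (r4 : ∀ i, a i * ContinuousLinearMap.adjoint (a i)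
        = ((q : ℂ) ^ 2) • (ContinuousLinearMap.adjoint (a i) * a i)
          + ((q : ℂ) ^ 2 * (1 - (q : ℂ) ^ 2)) •
              ∑ ℓ ∈ univ.filter (· < i),
                ContinuousLinearMap.adjoint (a ℓ) * a ℓ
          + (1 - (q : ℂ) ^ 2) • (t * t))
    (htψ : t ψ = ψ) (haψ : ∀ i, a i ψ = 0) (m : Fin n → ℕ) (ℓ : Fin n) :
    ‖a ℓ (wv a ψ m 0)‖^2
      = q^(2 * ∑ j ∈ Finset.Ico 0 (ℓ : ℕ), MN n m j
            + 4 * ∑ j ∈ Finset.Ico ((ℓ : ℕ)+1) n, MN n m j + 2*(m ℓ - 1))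
          * (1 - q^(2 * m ℓ)) * ‖wv a ψ m 0‖^2 := by
  have hkey := aW q a t ψ hts r1 r3 r4 htψ haψ n 0 m ℓ (by omega) (by omega)
  by_cases hm : m ℓ = 0
  · rw [hkey, hm]
    simp
  · have hm1 : 1 ≤ m ℓ := by omega
    have hratio := norm_ratio q a t ψ hq0 hq1 hψ hts r1 r3 r4 htψ haψ n 0 m ℓ (by omega) (by omega) hm1
    rw [hkey, hratio, norm_smul, mul_pow]
    set A := ∑ j ∈ Finset.Ico 0 (ℓ : ℕ), MN n m j
    set B := ∑ j ∈ Finset.Ico ((ℓ : ℕ)+1) n, MN n m j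
    set c := m ℓ - 1
    have hq2le : q^(2 * m ℓ) ≤ 1 := pow_le_one₀ (le_of_lt hq0) (le_of_lt hq1)
    have hcast : (1 - ((q : ℂ))^(2 * m ℓ)) = (((1 - q^(2 * m ℓ) : ℝ)) : ℂ) := by
      push_cast
      ring
    have hnormc : ‖((q : ℂ))^(3*A+4*B+2*c) * (1 - ((q : ℂ))^(2 * m ℓ))‖
        = q^(3*A+4*B+2*c) * (1 - q^(2 * m ℓ)) := by
      rw [norm_mul, hcast, norm_pow, Complex.norm_real, Complex.norm_real,
        Real.norm_eq_abs, Real.norm_eq_abs, abs_of_pos hq0,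
        abs_of_nonneg (by linarith : (0:ℝ) ≤ 1 - q^(2 * m ℓ))]
    rw [hnormc, mul_pow, ← pow_mul]
    rw [show (3*A+4*B+2*c)*2 = (A+A)+(A+A+A+A)+(B+B+B+B)+(B+B+B+B)+(c+c)+(c+c) from by ring,
      show 2*A+4*B+2*c = (A+A)+(B+B+B+B)+(c+c) from by ring,
      show 4*A+4*B+2*c = (A+A+A+A)+(B+B+B+B)+(c+c) from by ring]
    simp only [pow_add]
    ring

lemma main_norm (hq0 : 0 < q) (hq1 : q < 1) (hψ : ‖ψ‖ = 1)
    (hts : ContinuousLinearMap.adjoint t = t)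
    (r1 : ∀ i, a i * t = ((q : ℂ) ^ 2) • (t * a i))
    (r3 : ∀ i j, i < j → a i * ContinuousLinearMap.adjoint (a j)
      = ((q : ℂ) ^ 3) • (ContinuousLinearMap.adjoint (a j) * a i))
    (r4 : ∀ i, a i * ContinuousLinearMap.adjoint (a i)
        = ((q : ℂ) ^ 2) • (ContinuousLinearMap.adjoint (a i) * a i)
          + ((q : ℂ) ^ 2 * (1 - (q : ℂ) ^ 2)) •
              ∑ ℓ ∈ univ.filter (· < i),
                ContinuousLinearMap.adjoint (a ℓ) * a ℓ
          + (1 - (q : ℂ) ^ 2) • (t * t))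
    (htψ : t ψ = ψ) (haψ : ∀ i, a i ψ = 0) (m : Fin n → ℕ) (i : Fin n) :
    ‖(ContinuousLinearMap.adjoint (a i)) (wv a ψ m 0)‖^2
      = q^(2 * ∑ j ∈ Finset.range ((i : ℕ)+1), MN n m j
            + 4 * ∑ j ∈ Finset.Ico ((i : ℕ)+1) n, MN n m j)
          * (1 - q^(2*(m i + 1))) * ‖wv a ψ m 0‖^2 := by
  set v := wv a ψ m 0 with hv
  have hterm1 : (inner ℂ v ((ContinuousLinearMap.adjoint (a i)) (a i v)) : ℂ)
      = inner ℂ (a i v) (a i v) := by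
    rw [ContinuousLinearMap.adjoint_inner_right]
  have htermt : (inner ℂ v (t (t v)) : ℂ) = inner ℂ (t v) (t v) := by
    conv_lhs => rw [show t (t v) = (ContinuousLinearMap.adjoint t) (t v) from by rw [hts]]
    rw [ContinuousLinearMap.adjoint_inner_right]
  have e3 : (inner ℂ ((ContinuousLinearMap.adjoint (a i)) v)
        ((ContinuousLinearMap.adjoint (a i)) v) : ℂ)
      = ((q : ℂ)^2) * inner ℂ (a i v) (a i v)
        + ((q : ℂ)^2*(1-(q : ℂ)^2)) *
            (∑ ℓ ∈ univ.filter (· < i), (inner ℂ (a ℓ v) (a ℓ v) : ℂ))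
        + (1-(q : ℂ)^2) * inner ℂ (t v) (t v) := by
    rw [ContinuousLinearMap.adjoint_inner_left]
    rw [show a i ((ContinuousLinearMap.adjoint (a i)) v)
      = (a i * ContinuousLinearMap.adjoint (a i)) v from rfl]
    rw [r4 i, ContinuousLinearMap.add_apply, ContinuousLinearMap.add_apply,
      ContinuousLinearMap.smul_apply, ContinuousLinearMap.smul_apply,
      ContinuousLinearMap.smul_apply, ContinuousLinearMap.mul_apply,
      ContinuousLinearMap.mul_apply, ContinuousLinearMap.sum_apply]
    rw [inner_add_right, inner_add_right, inner_smul_right, inner_smul_right,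
      inner_smul_right, hterm1, htermt, inner_sum]
    congr 2
    congr 1
    apply Finset.sum_congr rfl
    intro ℓ _
    rw [ContinuousLinearMap.mul_apply, ContinuousLinearMap.adjoint_inner_right]
  simp only [inner_self_eq_norm_sq_to_K] at e3
  have hreal : ‖(ContinuousLinearMap.adjoint (a i)) v‖^2
      = q^2 * ‖a i v‖^2 + q^2*(1-q^2) * (∑ ℓ ∈ univ.filter (· < i), ‖a ℓ v‖^2)
        + (1-q^2) * ‖t v‖^2 := by
    push_cast [Complex.coe_algebraMap] at e3
    rw [← RCLike.ofReal_inj (K := ℂ)]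
    push_cast [Complex.coe_algebraMap]
    linear_combination e3
  have htv : ‖t v‖^2 = q^(4 * ∑ j ∈ Finset.Ico 0 n, MN n m j) * ‖v‖^2 := by
    have htw := tW q a t ψ hts r1 htψ n 0 m (by omega)
    rw [hv, htw, norm_smul, norm_pow, Complex.norm_real, Real.norm_eq_abs, abs_of_pos hq0,
      mul_pow, ← pow_mul]
    rw [show 2 * (∑ j ∈ Finset.Ico 0 n, MN n m j) * 2 = 4 * ∑ j ∈ Finset.Ico 0 n, MN n m j
      from by ring]
  have hsub : ∑ ℓ ∈ univ.filter (· < i), ‖a ℓ v‖^2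
      = (∑ s ∈ Finset.range (i : ℕ),
          q^(2 * ∑ j ∈ Finset.range s, MN n m j + 4 * ∑ j ∈ Finset.Ico (s+1) n, MN n m j
              + 2*(MN n m s - 1)) * (1 - q^(2 * MN n m s))) * ‖v‖^2 := by
    rw [Finset.sum_congr rfl (fun ℓ _ => by
      rw [hv, aW_norm q a t ψ hq0 hq1 hψ hts r1 r3 r4 htψ haψ m ℓ, ← Finset.range_eq_Ico, ← MN_coe m ℓ])]
    rw [fin_filter_lt_sum i (fun s => (q^(2 * ∑ j ∈ Finset.range s, MN n m j
        + 4 * ∑ j ∈ Finset.Ico (s+1) n, MN n m j + 2*(MN n m s - 1))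
        * (1 - q^(2 * MN n m s))) * ‖wv a ψ m 0‖^2)]
    rw [← Finset.sum_mul, hv]
  have hsubi : ‖a i v‖^2
      = q^(2 * ∑ j ∈ Finset.range (i : ℕ), MN n m j
            + 4 * ∑ j ∈ Finset.Ico ((i : ℕ)+1) n, MN n m j + 2*(MN n m (i : ℕ) - 1))
          * (1 - q^(2 * MN n m (i : ℕ))) * ‖v‖^2 := by
    rw [hv, aW_norm q a t ψ hq0 hq1 hψ hts r1 r3 r4 htψ haψ m i, ← Finset.range_eq_Ico, ← MN_coe m i]
  have htel := telescope q n (MN n m) (i : ℕ) i.isLt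
  rw [hreal, hsub, hsubi, htv, ← MN_coe m i]
  linear_combination (‖v‖^2) * htel

end Rel


end QSaux

/-- in any `*`-representation of `Pol(Σ_q^{2n})` (given by bounded
operators `a_i`, `t` satisfying the defining relations) with a unit vector `ψ`
satisfying `t ψ = ψ` and `a_i ψ = 0`, the vectors `ψ^m` satisfy
`‖a_i* ψ^m‖² = q^{2∑_{j≤i} m_j} q^{4∑_{j>i} m_j} (1 - q^{2(m_i+1)}) ‖ψ^m‖²`,
and hence `ψ^m ≠ 0` for every multi-index `m ∈ ℕⁿ`. -/
theorem quantum_sphere_representation_vectors {H : Type*} [NormedAddCommGroup H]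
    [InnerProductSpace ℂ H] [CompleteSpace H] (n : ℕ)
    (q : ℝ) (hq0 : 0 < q) (hq1 : q < 1)
    (a : Fin n → H →L[ℂ] H) (t : H →L[ℂ] H)
    (hts : ContinuousLinearMap.adjoint t = t)
    (r1 : ∀ i, a i * t = ((q : ℂ) ^ 2) • (t * a i))
    (r2 : ∀ i j, i < j → a i * a j = ((q : ℂ))⁻¹ • (a j * a i))
    (r3 : ∀ i j, i < j →
      a i * ContinuousLinearMap.adjoint (a j)
        = ((q : ℂ) ^ 3) • (ContinuousLinearMap.adjoint (a j) * a i))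
    (r4 : ∀ i, a i * ContinuousLinearMap.adjoint (a i)
        = ((q : ℂ) ^ 2) • (ContinuousLinearMap.adjoint (a i) * a i)
          + ((q : ℂ) ^ 2 * (1 - (q : ℂ) ^ 2)) •
              ∑ ℓ ∈ univ.filter (· < i),
                ContinuousLinearMap.adjoint (a ℓ) * a ℓ
          + (1 - (q : ℂ) ^ 2) • (t * t))
    (r5 : ((q : ℂ) ^ 2) •
        (∑ i, ContinuousLinearMap.adjoint (a i) * a i) = t - t * t)
    (ψ : H) (hψ : ‖ψ‖ = 1) (htψ : t ψ = ψ) (haψ : ∀ i, a i ψ = 0) :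
    (∀ (m : Fin n → ℕ) (i : Fin n),
      ‖ContinuousLinearMap.adjoint (a i) (psiVec q a ψ m)‖ ^ 2
        = q ^ (2 * ∑ j ∈ univ.filter (· ≤ i), m j) *
            q ^ (4 * ∑ j ∈ univ.filter (i < ·), m j) *
            (1 - q ^ (2 * (m i + 1))) * ‖psiVec q a ψ m‖ ^ 2) ∧
    ∀ m : Fin n → ℕ, psiVec q a ψ m ≠ 0 := by
  classical
  have hpsi : ∀ m : Fin n → ℕ,
      psiVec q a ψ m = ((cConst q m : ℝ) : ℂ) • QSaux.wv a ψ m 0 := fun m => rfl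
  constructor
  · intro m i
    rw [hpsi m, map_smul, norm_smul, norm_smul, mul_pow, mul_pow,
      QSaux.main_norm q a t ψ hq0 hq1 hψ hts r1 r3 r4 htψ haψ m i,
      QSaux.fin_filter_le_sum i m, QSaux.fin_filter_gt_sum i m, pow_add]
    ring
  · intro m
    rw [hpsi m]
    apply smul_ne_zero
    · rw [ne_eq, Complex.ofReal_eq_zero]
      unfold cConst
      apply mul_ne_zero
      · apply zpow_ne_zero
        exact ne_of_gt hq0
      · apply inv_ne_zero
        apply Finset.prod_ne_zero_iff.2
        intro j _
        apply Real.sqrt_ne_zero'.2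
        unfold qPoch
        apply Finset.prod_pos
        intro s _
        have h2 : q^2 < 1 := by nlinarith
        have h3 : (q^2)^s ≤ 1 := pow_le_one₀ (by positivity) (le_of_lt h2)
        have h4 : (0:ℝ) ≤ (q^2)^s := by positivity
        nlinarith
    · exact QSaux.wv_ne q a t ψ hq0 hq1 hψ hts r1 r3 r4 htψ haψ n 0 m (by omega)
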